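/- Let E be a nonzero finite-dimensional complex inner product space, T : E → E a self-adjoint linear map, and ε a real number that is not an eigenvalue of T, so that T − ε·id is invertible. Let μ be an eigenvalue of T, let δ > 0 be a real number such that δ ≤ |ν − ε| for every eigenvalue ν of T with ν ≠ μ, and let P denote the orthogonal projection of E onto the eigenspace ker(T − μ·id). Then for every ψ ∈ E and every natural number n, ‖(μ − ε)^n • ((T − ε·id)⁻¹)^n ψ − P ψ‖ ≤ (|μ − ε|/δ)^n · ‖ψ‖. -/

import Mathlib

open Filter Module

/-- Quantitative convergence of inverse iteration: if every eigenvalue of `T` other than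
`μ` is at distance at least `δ` from the shift `ε`, then
`‖(μ − ε)ⁿ (T − ε·id)⁻ⁿ ψ − P ψ‖ ≤ (|μ − ε|/δ)ⁿ ‖ψ‖`. -/
theorem inverse_iteration_rate
    {E : Type*} [NormedAddCommGroup E] [InnerProductSpace ℂ E]
    [FiniteDimensional ℂ E] [Nontrivial E]
    (T : Module.End ℂ E) (hT : LinearMap.IsSymmetric T)
    (ε : ℝ) (hε : ¬ Module.End.HasEigenvalue T (ε : ℂ))
    (μ : ℂ) (hμ : Module.End.HasEigenvalue T μ)
    (δ : ℝ) (hδ : 0 < δ)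
    (hgap : ∀ ν : ℂ, Module.End.HasEigenvalue T ν → ν ≠ μ → δ ≤ ‖ν - (ε : ℂ)‖)
    (ψ : E) (n : ℕ) :
    ‖(μ - (ε : ℂ)) ^ n •
          ((Ring.inverse (T - (ε : ℂ) • (1 : Module.End ℂ E)) ^ n) ψ) -
        (((Module.End.eigenspace T μ).orthogonalProjectionOnto ψ : E))‖ ≤
      (‖μ - (ε : ℂ)‖ / δ) ^ n * ‖ψ‖ := by
  classical
  set A : Module.End ℂ E := T - (ε : ℂ) • 1 with hAdef
  set S : Module.End ℂ E := Ring.inverse A with hSdef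
  -- A is a unit
  have hAunit : IsUnit A := by
    rw [LinearMap.isUnit_iff_ker_eq_bot, Submodule.eq_bot_iff]
    intro x hx
    by_contra hx0
    refine hε (Module.End.hasEigenvalue_of_hasEigenvector ⟨Module.End.mem_eigenspace_iff.mpr ?_, hx0⟩)
    have : T x - (ε : ℂ) • x = 0 := by
      simpa [hAdef, LinearMap.sub_apply, LinearMap.smul_apply] using hx
    linear_combination (norm := module) this
  have hSA : ∀ x : E, S (A x) = x := by
    intro x
    have : (S * A) x = (1 : Module.End ℂ E) x := by rw [Ring.inverse_mul_cancel _ hAunit]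
    simpa [Module.End.mul_apply] using this
  have hAS : ∀ x : E, A (S x) = x := by
    intro x
    have : (A * S) x = (1 : Module.End ℂ E) x := by rw [Ring.mul_inverse_cancel _ hAunit]
    simpa [Module.End.mul_apply] using this
  -- eigenbasis
  set N := Module.finrank ℂ E with hNdef
  have hn : Module.finrank ℂ E = N := rfl
  set b := hT.eigenvectorBasis hn with hbdef
  set lam := hT.eigenvalues hn with hlamdef
  have heig : ∀ i, Module.End.HasEigenvalue T ((lam i : ℂ)) := fun i =>
    hT.hasEigenvalue_eigenvalues hn i
  have hne : ∀ i, ((lam i : ℂ)) ≠ (ε : ℂ) := by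
    intro i h
    exact hε (h ▸ heig i)
  have hμε : μ ≠ (ε : ℂ) := by
    intro h
    exact hε (h ▸ hμ)
  -- S on basis vectors
  have hSb : ∀ i, S (b i) = ((lam i : ℂ) - ε)⁻¹ • b i := by
    intro i
    have hA : A (((lam i : ℂ) - ε)⁻¹ • b i) = b i := by
      have hT' : T (b i) = (lam i : ℂ) • b i := hT.apply_eigenvectorBasis hn i
      have hd : ((lam i : ℂ) - ε) ≠ 0 := sub_ne_zero.mpr (hne i)
      simp only [hAdef, LinearMap.sub_apply, LinearMap.smul_apply, Module.End.one_apply,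
        map_smul, hT', smul_smul]
      rw [← sub_smul, smul_smul, inv_mul_cancel₀ hd, one_smul]
    calc S (b i) = S (A (((lam i : ℂ) - ε)⁻¹ • b i)) := by rw [hA]
    _ = ((lam i : ℂ) - ε)⁻¹ • b i := hSA _
  -- S is symmetric
  have hAsymm : LinearMap.IsSymmetric A := by
    intro x y
    simp only [hAdef, LinearMap.sub_apply, LinearMap.smul_apply, Module.End.one_apply,
      inner_sub_left, inner_sub_right, inner_smul_left, inner_smul_right, hT x y,
      Complex.conj_ofReal]
  have hSsymm : LinearMap.IsSymmetric S := by
    intro x y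
    calc inner ℂ (S x) y = inner ℂ (S x) (A (S y)) := by rw [hAS]
    _ = inner ℂ (A (S x)) (S y) := (hAsymm _ _).symm
    _ = inner ℂ x (S y) := by rw [hAS]
  -- repr of S, and of S^n
  have hSrepr : ∀ (x : E) (i : Fin N), b.repr (S x) i = ((lam i : ℂ) - ε)⁻¹ * b.repr x i := by
    intro x i
    rw [b.repr_apply_apply, b.repr_apply_apply, ← hSsymm (b i) x, hSb i, inner_smul_left]
    congr 1
    simp [map_inv₀, map_sub, Complex.conj_ofReal]
  have hSnrepr : ∀ (m : ℕ) (x : E) (i : Fin N),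
      b.repr ((S ^ m) x) i = (((lam i : ℂ) - ε)⁻¹) ^ m * b.repr x i := by
    intro m
    induction m with
    | zero => intro x i; simp
    | succ k ih =>
      intro x i
      have : (S ^ (k + 1)) x = (S ^ k) (S x) := by
        rw [pow_succ, Module.End.mul_apply]
      rw [this, ih, hSrepr, pow_succ]
      ring
  -- the projection
  set c : Fin N → ℂ := fun i => b.repr ψ i with hcdef
  set Q : Finset (Fin N) := Finset.univ.filter (fun i => (lam i : ℂ) = μ) with hQdef
  set w : E := ∑ i ∈ Q, c i • b i with hwdef
  have hb_mem : ∀ i, b i ∈ Module.End.eigenspace T ((lam i : ℂ)) := fun i =>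
    Module.End.mem_eigenspace_iff.mpr (hT.apply_eigenvectorBasis hn i)
  have hw_mem : w ∈ Module.End.eigenspace T μ := by
    refine Submodule.sum_mem _ fun i hi => Submodule.smul_mem _ _ ?_
    have : (lam i : ℂ) = μ := (Finset.mem_filter.mp hi).2
    exact this ▸ hb_mem i
  have hproj : (((Module.End.eigenspace T μ).orthogonalProjectionOnto ψ : E)) = w := by
    rw [Submodule.coe_orthogonalProjectionOnto_apply]
    refine Submodule.eq_starProjection_of_mem_of_inner_eq_zero hw_mem ?_
    intro v hv
    have hψ : ψ = ∑ i, c i • b i := (b.sum_repr ψ).symm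
    have hsplit : ψ - w = ∑ i ∈ Finset.univ.filter (fun i => ¬ ((lam i : ℂ) = μ)), c i • b i := by
      have hsum := Finset.sum_filter_add_sum_filter_not Finset.univ
        (fun i => (lam i : ℂ) = μ) (fun i => c i • b i)
      rw [hψ, hwdef, hQdef, ← hsum]
      abel
    rw [hsplit, sum_inner]
    refine Finset.sum_eq_zero fun i hi => ?_
    have hiμ : (lam i : ℂ) ≠ μ := (Finset.mem_filter.mp hi).2
    rw [inner_smul_left]
    have : (inner ℂ (b i) v : ℂ) = 0 := by
      have := hT.orthogonalFamily_eigenspaces hiμ (⟨b i, hb_mem i⟩ :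
        Module.End.eigenspace T ((lam i : ℂ))) (⟨v, hv⟩ : Module.End.eigenspace T μ)
      simpa using this
    rw [this, mul_zero]
  -- the difference vector in coordinates
  set D : E := (μ - (ε : ℂ)) ^ n • ((S ^ n) ψ) - w with hDdef
  have hwrepr : ∀ i, b.repr w i = if (lam i : ℂ) = μ then c i else 0 := by
    intro i
    rw [b.repr_apply_apply, hwdef]
    by_cases h : (lam i : ℂ) = μ
    · rw [b.orthonormal.inner_right_sum c (by simp [hQdef, h])]
      simp [h]
    · simp only [h, if_false]
      rw [inner_sum]
      refine Finset.sum_eq_zero fun j hj => ?_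
      have hj' : (lam j : ℂ) = μ := (Finset.mem_filter.mp hj).2
      have hij : i ≠ j := by rintro rfl; exact h hj'
      rw [inner_smul_right, orthonormal_iff_ite.mp b.orthonormal]
      simp [hij]
  have hDrepr : ∀ i, b.repr D i =
      ((μ - (ε : ℂ)) ^ n * (((lam i : ℂ) - ε)⁻¹) ^ n) * c i
        - (if (lam i : ℂ) = μ then c i else 0) := by
    intro i
    have h1 : b.repr D i = (μ - (ε : ℂ)) ^ n * b.repr ((S ^ n) ψ) i - b.repr w i := by
      simp [hDdef, map_sub, map_smul, smul_eq_mul]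
    rw [h1, hSnrepr n ψ i, hwrepr i]
    ring_nf
    rfl
  set C : ℝ := (‖μ - (ε : ℂ)‖ / δ) ^ n with hCdef
  have hC0 : 0 ≤ C := pow_nonneg (div_nonneg (norm_nonneg _) hδ.le) n
  -- termwise bound
  have hterm : ∀ i, ‖b.repr D i‖ ≤ C * ‖c i‖ := by
    intro i
    rw [hDrepr i]
    by_cases h : (lam i : ℂ) = μ
    · have hd : ((lam i : ℂ) - ε) ≠ 0 := sub_ne_zero.mpr (hne i)
      rw [h] at hd ⊢
      rw [if_pos rfl, ← mul_pow, mul_inv_cancel₀ (sub_ne_zero.mpr hμε), one_pow, one_mul,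
        sub_self, norm_zero]
      positivity
    · rw [if_neg h, sub_zero, norm_mul, norm_mul, norm_pow, norm_pow, norm_inv]
      have hgap' : δ ≤ ‖(lam i : ℂ) - ε‖ := hgap _ (heig i) h
      have hpos : (0:ℝ) < ‖(lam i : ℂ) - ε‖ := lt_of_lt_of_le hδ hgap'
      have h1 : ‖(lam i : ℂ) - ε‖⁻¹ ≤ δ⁻¹ := inv_anti₀ hδ hgap'
      have h2 : ‖μ - (ε : ℂ)‖ ^ n * (‖(lam i : ℂ) - ε‖⁻¹) ^ n ≤
          ‖μ - (ε : ℂ)‖ ^ n * (δ⁻¹) ^ n := by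
        gcongr
      calc ‖μ - (ε : ℂ)‖ ^ n * (‖(lam i : ℂ) - ε‖⁻¹) ^ n * ‖c i‖
          ≤ ‖μ - (ε : ℂ)‖ ^ n * (δ⁻¹) ^ n * ‖c i‖ := by
            exact mul_le_mul_of_nonneg_right h2 (norm_nonneg _)
      _ = C * ‖c i‖ := by
            rw [hCdef, div_pow, ← mul_pow]
            ring_nf
  -- sum up
  have hnormD : ‖D‖ ≤ C * ‖ψ‖ := by
    have h1 : ‖D‖ = ‖b.repr D‖ := (b.repr.norm_map D).symm
    have h2 : ‖ψ‖ = ‖b.repr ψ‖ := (b.repr.norm_map ψ).symm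
    rw [h1, h2, EuclideanSpace.norm_eq, EuclideanSpace.norm_eq]
    rw [← Real.sqrt_sq hC0, ← Real.sqrt_mul (sq_nonneg C)]
    refine Real.sqrt_le_sqrt ?_
    rw [Finset.mul_sum]
    refine Finset.sum_le_sum fun i _ => ?_
    have := hterm i
    calc ‖b.repr D i‖ ^ 2 ≤ (C * ‖c i‖) ^ 2 := by
          exact pow_le_pow_left₀ (norm_nonneg _) this 2
    _ = C ^ 2 * ‖b.repr ψ i‖ ^ 2 := by rw [mul_pow]
  rw [hproj]
  calc ‖(μ - (ε : ℂ)) ^ n • ((S ^ n) ψ) - w‖ = ‖D‖ := by rw [hDdef]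
  _ ≤ C * ‖ψ‖ := hnormD
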